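/- Fix ρ > 0, integers M ≥ N ≥ 1, and positive reals c_0,...,c_{N-1}, with C := Σ_{j=0}^{N-1} binom(M,j)^2 binom(M-j-1,N-j-1)^2 ρ^{M-j}/c_j. If c' < -1/C, then there exists a rank-one positive semidefinite N × N matrix A with entries in (0, ρ) such that the matrix obtained by applying f(z) = Σ_{j=0}^{N-1} c_j z^j + c' z^M entrywise to A is not positive semidefinite. -/

import Mathlib

open Matrix BigOperators

/-- Complete homogeneous symmetric polynomial `h_k`, as a function of a point `x ∈ F^N`. -/
def hfun {F : Type*} [CommRing F] {N : ℕ} (x : Fin N → F) (k : ℕ) : F :=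
  ∑ d ∈ Finset.univ.filter (fun d : Fin N → Fin (k + 1) => ∑ i, (d i : ℕ) = k),
    ∏ i, x i ^ (d i : ℕ)

/-- Schur polynomial (via the Jacobi–Trudi identity) of the partition `lam`,
evaluated at the point `x ∈ F^N`. -/
def schurAt {F : Type*} [CommRing F] {N : ℕ} (x : Fin N → F) (lam : Fin N → ℕ) : F :=
  Matrix.det (Matrix.of fun i j : Fin N =>
    if (i : ℕ) ≤ lam i + (j : ℕ) then hfun x (lam i + (j : ℕ) - (i : ℕ)) else 0)

/-- The hook partition `μ(M,N,j) = (M-N+1, 1^{N-j-1}, 0^j)`. -/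
def hookP (M N j : ℕ) : Fin N → ℕ :=
  fun i => if (i : ℕ) = 0 then M - N + 1 else if (i : ℕ) < N - j then 1 else 0

/-- Vandermonde determinant `Δ_N(x) = ∏_{i<j} (x_i - x_j)`. -/
def vdm {F : Type*} [CommRing F] {N : ℕ} (x : Fin N → F) : F :=
  ∏ i : Fin N, ∏ j ∈ Finset.Ioi i, (x i - x j)

/-! ### Auxiliary development: complete homogeneous symmetric functions on lists,
Newton-form interpolation of the monomial `t ^ M`, and limiting binomial identities. -/

/-- Complete homogeneous symmetric function of degree `m` of the entries of a list. -/
def hh : ℕ → List ℝ → ℝ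
  | 0, _ => 1
  | _+1, [] => 0
  | m+1, x::S => hh (m+1) S + x * hh m (x::S)
  termination_by m S => (m, S.length)

@[simp] lemma hh_zero (S : List ℝ) : hh 0 S = 1 := by cases S <;> simp [hh]
@[simp] lemma hh_nil (m : ℕ) : hh (m+1) [] = 0 := by simp [hh]
lemma hh_cons (m : ℕ) (x : ℝ) (S : List ℝ) :
    hh (m+1) (x::S) = hh (m+1) S + x * hh m (x::S) := by rw [hh]

lemma hh_key (m : ℕ) (S : List ℝ) (t a : ℝ) :
    hh (m+1) (t::S) = hh (m+1) (a::S) + (t - a) * hh m (t::a::S) := by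
  induction m with
  | zero => simp [hh_cons]
  | succ m ih =>
    rw [hh_cons, ih, hh_cons (m+1) a S, hh_cons m t (a::S)]
    ring

@[simp] lemma hh_single (m : ℕ) (x : ℝ) : hh m [x] = x ^ m := by
  induction m with
  | zero => simp
  | succ m ih => rw [hh_cons, ih, hh_nil]; ring

lemma hh_replicate (m k : ℕ) (x : ℝ) :
    hh m (List.replicate (k+1) x) = ((m + k).choose k : ℝ) * x ^ m := by
  induction m generalizing k with
  | zero => simp
  | succ m ih =>
    induction k with
    | zero => simp
    | succ k ihk =>
      rw [List.replicate_succ, hh_cons, ← List.replicate_succ, ihk, ih (k+1)]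
      have : (m + 1 + (k + 1)).choose (k+1) = (m + 1 + k).choose k + (m + 1 + k).choose (k+1) := by
        rw [show m + 1 + (k+1) = (m + 1 + k) + 1 by omega, Nat.choose_succ_succ']
      rw [this]
      push_cast
      ring_nf

/-- Coefficients of `∏_{x ∈ S} (t - x)` as a polynomial in `t`. -/
def cc : ℕ → List ℝ → ℝ
  | 0, [] => 1
  | _+1, [] => 0
  | 0, x::S => -x * cc 0 S
  | j+1, x::S => cc j S - x * cc (j+1) S

@[simp] lemma cc_nil_zero : cc 0 [] = 1 := by rw [cc]
@[simp] lemma cc_nil_succ (j : ℕ) : cc (j+1) [] = 0 := by rw [cc]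
lemma cc_cons_zero (x : ℝ) (S : List ℝ) : cc 0 (x::S) = -x * cc 0 S := by rw [cc]
lemma cc_cons_succ (j : ℕ) (x : ℝ) (S : List ℝ) :
    cc (j+1) (x::S) = cc j S - x * cc (j+1) S := by rw [cc]

lemma cc_eq_zero {j : ℕ} (S : List ℝ) (h : S.length < j) : cc j S = 0 := by
  induction S generalizing j with
  | nil => obtain ⟨j, rfl⟩ := Nat.exists_eq_add_of_lt h; simp [Nat.add_comm]
  | cons x S ih =>
    obtain ⟨i, rfl⟩ : ∃ i, j = i + 1 := ⟨j - 1, by omega⟩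
    rw [cc_cons_succ, ih (j := i) (by simp at h; omega), ih (j := i+1) (by simp at h; omega)]
    ring

lemma prod_eq_sum_cc (S : List ℝ) (t : ℝ) :
    (S.map (fun x => t - x)).prod = ∑ j ∈ Finset.range (S.length + 1), cc j S * t ^ j := by
  induction S with
  | nil => simp
  | cons x S ih =>
    rw [List.map_cons, List.prod_cons, ih]
    rw [List.length_cons]
    rw [Finset.sum_range_succ' (fun j => cc j (x::S) * t ^ j)]
    simp only [cc_cons_succ, cc_cons_zero, pow_zero, mul_one]
    rw [sub_mul, Finset.mul_sum, Finset.mul_sum]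
    have h1 : ∑ j ∈ Finset.range (S.length + 1), (cc j S - x * cc (j+1) S) * t ^ (j+1)
        = (∑ j ∈ Finset.range (S.length + 1), cc j S * t ^ (j+1))
          - ∑ j ∈ Finset.range (S.length + 1), x * (cc (j+1) S * t ^ (j+1)) := by
      rw [← Finset.sum_sub_distrib]; congr 1; ext j; ring
    rw [h1]
    have h2 : ∑ j ∈ Finset.range (S.length + 1), t * (cc j S * t ^ j)
        = ∑ j ∈ Finset.range (S.length + 1), cc j S * t ^ (j+1) := by
      congr 1; ext j; ring
    have h3 : (∑ j ∈ Finset.range (S.length + 1), x * (cc (j+1) S * t ^ (j+1)))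
          + x * (cc 0 S * t ^ 0)
        = ∑ j ∈ Finset.range (S.length + 1), x * (cc j S * t ^ j) := by
      rw [Finset.sum_range_succ, cc_eq_zero S (Nat.lt_succ_self _),
        Finset.sum_range_succ' (fun j => x * (cc j S * t ^ j))]
      ring
    rw [h2, ← h3]
    ring

lemma cc_replicate (j k : ℕ) (x : ℝ) :
    cc j (List.replicate k x) = (k.choose j : ℝ) * (-x) ^ (k - j) := by
  induction k generalizing j with
  | zero =>
    cases j with
    | zero => simp
    | succ j => simp
  | succ k ih =>
    rw [List.replicate_succ]
    cases j with
    | zero =>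
      rw [cc_cons_zero, ih 0]
      simp [pow_succ]
      ring
    | succ j =>
      rw [cc_cons_succ, ih j, ih (j+1)]
      rcases lt_trichotomy j k with h | rfl | h
      · have h1 : k - j = (k - (j+1)) + 1 := by omega
        have h2 : k + 1 - (j + 1) = k - (j+1) + 1 := by omega
        rw [h1, h2, Nat.choose_succ_succ']
        push_cast
        ring
      · simp [Nat.choose_succ_self, Nat.sub_self, Nat.choose_self]
      · rw [Nat.choose_eq_zero_of_lt h, Nat.choose_eq_zero_of_lt (show k < j + 1 by omega),
          Nat.choose_eq_zero_of_lt (show k + 1 < j + 1 by omega)]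
        simp

lemma continuous_hh {α : Type*} [TopologicalSpace α] (m : ℕ) (l : List ℕ) (g : ℕ → α → ℝ)
    (hg : ∀ i, Continuous (g i)) :
    Continuous (fun a => hh m (l.map (fun i => g i a))) := by
  induction m generalizing l with
  | zero => simpa [hh] using continuous_const
  | succ m ih =>
    induction l with
    | nil => simpa [hh] using continuous_const
    | cons i l ihl =>
      simp only [List.map_cons, hh_cons]
      exact ihl.add ((hg i).mul (by simpa only [List.map_cons] using ih (i :: l)))

lemma continuous_cc {α : Type*} [TopologicalSpace α] (j : ℕ) (l : List ℕ) (g : ℕ → α → ℝ)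
    (hg : ∀ i, Continuous (g i)) :
    Continuous (fun a => cc j (l.map (fun i => g i a))) := by
  induction l generalizing j with
  | nil => cases j <;> simpa [cc] using continuous_const
  | cons i l ihl =>
    cases j with
    | zero =>
      simp only [List.map_cons, cc_cons_zero]
      exact ((hg i).neg).mul (ihl 0)
    | succ j =>
      simp only [List.map_cons, cc_cons_succ]
      exact (ihl j).sub ((hg i).mul (ihl (j+1)))

/-- The list of the first `k` nodes (in reverse order). -/
def NL (u : ℕ → ℝ) : ℕ → List ℝ
  | 0 => []
  | k+1 => u k :: NL u k

@[simp] lemma NL_zero (u : ℕ → ℝ) : NL u 0 = [] := rfl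
@[simp] lemma NL_succ (u : ℕ → ℝ) (k : ℕ) : NL u (k+1) = u k :: NL u k := rfl

@[simp] lemma NL_length (u : ℕ → ℝ) (k : ℕ) : (NL u k).length = k := by
  induction k with
  | zero => rfl
  | succ k ih => simp [ih]

lemma NL_mem (u : ℕ → ℝ) {i k : ℕ} (h : i < k) : u i ∈ NL u k := by
  induction k with
  | zero => omega
  | succ k ih =>
    rcases Nat.lt_succ_iff_lt_or_eq.mp h with h' | rfl
    · exact List.mem_cons_of_mem _ (ih h')
    · exact List.mem_cons_self

lemma NL_const (x : ℝ) (k : ℕ) : NL (fun _ => x) k = List.replicate k x := by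
  induction k with
  | zero => rfl
  | succ k ih => simp [ih, List.replicate_succ]

lemma NL_eq_map (u : ℕ → ℝ) (k : ℕ) : NL u k = (List.range k).reverse.map u := by
  induction k with
  | zero => rfl
  | succ k ih => simp [List.range_succ, ih]

/-- Coefficients of the degree `< N` interpolant of `t ^ M` at the nodes `u 0, …, u (N-1)`,
written in Newton form and expanded in the monomial basis. -/
def lam (M N : ℕ) (u : ℕ → ℝ) (j : ℕ) : ℝ :=
  ∑ k ∈ Finset.range N, hh (M - k) (u k :: NL u k) * cc j (NL u k)

lemma newton (M : ℕ) (u : ℕ → ℝ) (t : ℝ) :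
    ∀ k, k ≤ M →
    t ^ M = (∑ j ∈ Finset.range k,
        hh (M - j) (u j :: NL u j) * ((NL u j).map (fun x => t - x)).prod)
      + hh (M - k) (t :: NL u k) * ((NL u k).map (fun x => t - x)).prod := by
  intro k
  induction k with
  | zero => simp
  | succ k ih =>
    intro hk
    rw [ih (by omega), Finset.sum_range_succ]
    have hMk : M - k = (M - (k+1)) + 1 := by omega
    rw [hMk, hh_key (M - (k+1)) (NL u k) t (u k)]
    simp only [NL_succ, List.map_cons, List.prod_cons]
    ring

lemma sum_lam_pow (M N : ℕ) (u : ℕ → ℝ) (t : ℝ) :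
    ∑ j ∈ Finset.range N, lam M N u j * t ^ j
    = ∑ k ∈ Finset.range N,
        hh (M - k) (u k :: NL u k) * ((NL u k).map (fun x => t - x)).prod := by
  unfold lam
  simp only [Finset.sum_mul]
  rw [Finset.sum_comm]
  refine Finset.sum_congr rfl (fun k hk => ?_)
  have hk' : k + 1 ≤ N := Finset.mem_range.mp hk
  rw [prod_eq_sum_cc, NL_length]
  rw [Finset.mul_sum]
  rw [← Finset.sum_subset (Finset.range_subset_range.mpr hk')]
  · exact Finset.sum_congr rfl (fun j _ => by ring)
  · intro j _ hj
    rw [cc_eq_zero (NL u k) (by rw [NL_length]; exact by simp at hj ⊢; omega)]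
    ring

lemma interp (M N : ℕ) (hNM : N ≤ M) (u : ℕ → ℝ) {i : ℕ} (hi : i < N) :
    ∑ j ∈ Finset.range N, lam M N u j * (u i) ^ j = (u i) ^ M := by
  rw [sum_lam_pow]
  rw [newton M u (u i) N hNM]
  have hz : ((NL u N).map (fun x => u i - x)).prod = 0 := by
    apply List.prod_eq_zero
    exact List.mem_map.mpr ⟨u i, NL_mem u hi, by ring⟩
  rw [hz]
  ring

lemma alt_partial (m R : ℕ) (hm : 1 ≤ m) :
    ∑ r ∈ Finset.range (R+1), (-1:ℝ)^r * (m.choose r : ℝ)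
    = (-1)^R * ((m-1).choose R : ℝ) := by
  induction R with
  | zero => simp
  | succ R ih =>
    rw [Finset.sum_range_succ, ih]
    obtain ⟨m', rfl⟩ : ∃ m', m = m' + 1 := ⟨m - 1, by omega⟩
    rw [Nat.add_sub_cancel, Nat.choose_succ_succ]
    push_cast
    ring

lemma binom_id (M N j : ℕ) (hj : j < N) (hNM : N ≤ M) :
    ∑ k ∈ Finset.Ico j N, (-1:ℝ)^(k-j) * (M.choose k : ℝ) * (k.choose j : ℝ)
    = (-1)^(N-1-j) * (M.choose j : ℝ) * ((M-j-1).choose (N-1-j) : ℝ) := by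
  rw [Finset.sum_Ico_eq_sum_range]
  have key : ∀ r ∈ Finset.range (N - j),
      (-1:ℝ)^(j+r-j) * (M.choose (j+r) : ℝ) * ((j+r).choose j : ℝ)
      = (M.choose j : ℝ) * ((-1:ℝ)^r * ((M-j).choose r : ℝ)) := by
    intro r hr
    have hr' : r < N - j := Finset.mem_range.mp hr
    have h1 : M.choose (j+r) * (j+r).choose j = M.choose j * (M-j).choose r := by
      have := Nat.choose_mul (n := M) (k := j+r) (s := j) (by omega)
      simpa using this
    have h2 : j + r - j = r := by omega
    rw [h2]
    have hc : (M.choose (j+r) : ℝ) * ((j+r).choose j : ℝ)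
        = (M.choose j : ℝ) * ((M-j).choose r : ℝ) := by
      exact_mod_cast congrArg (Nat.cast : ℕ → ℝ) h1
    rw [mul_assoc, hc]
    ring
  rw [Finset.sum_congr rfl key, ← Finset.mul_sum]
  have hNj : N - j = (N - j - 1) + 1 := by omega
  rw [hNj, alt_partial (M - j) (N - j - 1) (by omega)]
  have e1 : N - j - 1 = N - 1 - j := by omega
  rw [e1]
  have e3 : (M - j - 1) = (M - j) - 1 := by omega
  rw [← e3]
  ring

lemma lam_const (M N : ℕ) (hNM : N ≤ M) (x : ℝ) (j : ℕ) (hj : j < N) :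
    lam M N (fun _ => x) j
    = (-1:ℝ)^(N-1-j) * (M.choose j : ℝ) * ((M-j-1).choose (N-1-j) : ℝ) * x^(M-j) := by
  unfold lam
  have step : ∀ k ∈ Finset.range N,
      hh (M - k) ((fun _ => x) k :: NL (fun _ => x) k) * cc j (NL (fun _ => x) k)
      = ((-1:ℝ)^(k-j) * (M.choose k : ℝ) * (k.choose j : ℝ)) * x^(M-j) := by
    intro k hk
    have hkN : k < N := Finset.mem_range.mp hk
    have hkM : k ≤ M := by omega
    rw [NL_const, ← List.replicate_succ, hh_replicate, cc_replicate]
    have hMk : M - k + k = M := by omega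
    rw [hMk]
    rcases le_or_gt j k with hjk | hjk
    · have hneg : (-x)^(k-j) = (-1:ℝ)^(k-j) * x^(k-j) := by rw [neg_pow]
      rw [hneg]
      have hxp : x ^ (M-k) * x^(k-j) = x^(M-j) := by
        rw [← pow_add]; congr 1; omega
      calc (M.choose k : ℝ) * x ^ (M-k) * ((k.choose j : ℝ) * ((-1:ℝ)^(k-j) * x^(k-j)))
          = ((-1:ℝ)^(k-j) * (M.choose k : ℝ) * (k.choose j : ℝ)) * (x ^ (M-k) * x^(k-j)) := by ring
        _ = _ := by rw [hxp]
    · rw [Nat.choose_eq_zero_of_lt hjk]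
      simp
  rw [Finset.sum_congr rfl step]
  have hsplit : Finset.range N = Finset.Ico 0 N := by simp
  rw [hsplit, ← Finset.sum_Ico_consecutive _ (Nat.zero_le j) (le_of_lt hj)]
  have hzero : ∀ k ∈ Finset.Ico 0 j,
      ((-1:ℝ)^(k-j) * (M.choose k : ℝ) * (k.choose j : ℝ)) * x^(M-j) = 0 := by
    intro k hk
    simp only [Finset.mem_Ico] at hk
    rw [Nat.choose_eq_zero_of_lt (show k < j by omega)]
    ring
  rw [Finset.sum_eq_zero hzero, zero_add, ← Finset.sum_mul, binom_id M N j hj hNM]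

lemma continuous_lam {α : Type*} [TopologicalSpace α] (M N j : ℕ) (g : ℕ → α → ℝ)
    (hg : ∀ i, Continuous (g i)) :
    Continuous (fun a => lam M N (fun i => g i a) j) := by
  unfold lam
  apply continuous_finset_sum
  intro k _
  have e1 : ∀ a : α, (fun i => g i a) k :: NL (fun i => g i a) k
      = ((List.range (k+1)).reverse.map (fun i => g i a)) := by
    intro a
    rw [show (fun i => g i a) k :: NL (fun i => g i a) k = NL (fun i => g i a) (k+1) from rfl,
      NL_eq_map]
  have e2 : ∀ a : α, NL (fun i => g i a) k
      = ((List.range k).reverse.map (fun i => g i a)) := fun a => NL_eq_map _ _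
  simp only [e1]
  simp only [e2]
  exact (continuous_hh _ _ g hg).mul (continuous_cc _ _ g hg)

/-- Sharpness: if `c' < -1/C(c; z^M; N, ρ)`, then the polynomial
`f(z) = Σ_{j<N} c_j z^j + c' z^M` applied entrywise fails to preserve positive
semidefiniteness on some rank-one psd matrix `u uᵀ` with entries in `(0, ρ)`. -/
theorem exists_rank_one_not_posSemidef (ρ : ℝ) (hρ : 0 < ρ) (N M : ℕ) (hN : 1 ≤ N)
    (hMN : N ≤ M) (c : Fin N → ℝ) (hc : ∀ j, 0 < c j) (c' : ℝ)
    (hc' : c' < -(∑ j : Fin N, ((M.choose (j : ℕ) : ℝ) ^ 2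
        * ((M - (j : ℕ) - 1).choose (N - (j : ℕ) - 1) : ℝ) ^ 2
        * ρ ^ (M - (j : ℕ)) / c j))⁻¹) :
    ∃ u : Fin N → ℝ, (∀ i, u i ∈ Set.Ioo 0 (Real.sqrt ρ)) ∧
      ¬ (Matrix.of fun i k : Fin N =>
          (∑ j : Fin N, c j * (u i * u k) ^ (j : ℕ)) + c' * (u i * u k) ^ M).PosSemidef := by
  classical
  have hs : 0 < Real.sqrt ρ := Real.sqrt_pos.mpr hρ
  set s : ℝ := Real.sqrt ρ with hs_def
  have hs2 : s ^ 2 = ρ := Real.sq_sqrt hρ.le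
  set C : ℝ := ∑ j : Fin N, ((M.choose (j : ℕ) : ℝ) ^ 2
      * ((M - (j : ℕ) - 1).choose (N - (j : ℕ) - 1) : ℝ) ^ 2
      * ρ ^ (M - (j : ℕ)) / c j) with hC_def
  have hterm : ∀ j : Fin N, 0 < (M.choose (j : ℕ) : ℝ) ^ 2
      * ((M - (j : ℕ) - 1).choose (N - (j : ℕ) - 1) : ℝ) ^ 2 * ρ ^ (M - (j : ℕ)) / c j := by
    intro j
    have hjN : (j : ℕ) < N := j.2
    have h1 : 0 < M.choose (j : ℕ) := Nat.choose_pos (by omega)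
    have h2 : 0 < (M - (j:ℕ) - 1).choose (N - (j:ℕ) - 1) := Nat.choose_pos (by omega)
    have h1' : (0:ℝ) < (M.choose (j : ℕ) : ℝ) := by exact_mod_cast h1
    have h2' : (0:ℝ) < ((M - (j:ℕ) - 1).choose (N - (j:ℕ) - 1) : ℝ) := by exact_mod_cast h2
    have h3 : (0:ℝ) < ρ ^ (M - (j:ℕ)) := pow_pos hρ _
    exact div_pos (by positivity) (hc j)
  have hNE : Nonempty (Fin N) := ⟨⟨0, by omega⟩⟩
  have hC : 0 < C := by
    rw [hC_def]
    exact Finset.sum_pos (fun j _ => hterm j) Finset.univ_nonempty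
  have hc'C : c' * C < -1 := by
    have h := mul_lt_mul_of_pos_right hc' hC
    rwa [neg_mul, inv_mul_cancel₀ hC.ne'] at h
  set L : ℕ → ℝ := fun j => (-1:ℝ)^(N-1-j) * (M.choose j : ℝ)
      * ((M-j-1).choose (N-1-j) : ℝ) * s^(M-j) with hL_def
  have hLsq : ∀ j : Fin N, (L (j:ℕ))^2 / c j
      = (M.choose (j:ℕ):ℝ)^2 * ((M - (j:ℕ) - 1).choose (N - (j:ℕ) - 1):ℝ)^2
        * ρ^(M-(j:ℕ)) / c j := by
    intro j
    have hsq : (s^(M-(j:ℕ)))^2 = ρ^(M-(j:ℕ)) := by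
      rw [← pow_mul, mul_comm (M-(j:ℕ)) 2, pow_mul, hs2]
    have hone : ((-1:ℝ)^(N-1-(j:ℕ)))^2 = 1 := by
      rw [← pow_mul, mul_comm (N-1-(j:ℕ)) 2, pow_mul, neg_one_sq, one_pow]
    have hnn : N - (j:ℕ) - 1 = N - 1 - (j:ℕ) := by omega
    rw [hL_def, hnn]
    simp only
    congr 1
    calc ((-1:ℝ)^(N-1-(j:ℕ)) * (M.choose (j:ℕ) : ℝ) * ((M-(j:ℕ)-1).choose (N-1-(j:ℕ)) : ℝ)
          * s^(M-(j:ℕ)))^2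
        = ((-1:ℝ)^(N-1-(j:ℕ)))^2 * ((M.choose (j:ℕ) : ℝ)^2
          * ((M-(j:ℕ)-1).choose (N-1-(j:ℕ)) : ℝ)^2 * (s^(M-(j:ℕ)))^2) := by ring
      _ = (M.choose (j:ℕ) : ℝ)^2 * ((M-(j:ℕ)-1).choose (N-1-(j:ℕ)) : ℝ)^2 * ρ^(M-(j:ℕ)) := by
          rw [hone, hsq, one_mul]
  have hLC : ∑ j : Fin N, (L (j:ℕ))^2 / c j = C := by
    rw [hC_def]
    exact Finset.sum_congr rfl fun j _ => hLsq j
  set a : Fin N → ℝ := fun j => L (j:ℕ) / c j with ha_def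
  set uf : ℝ → ℕ → ℝ := fun ε i => s * (1 - ε * ((i:ℝ)+1)) with huf_def
  set G : ℝ → ℝ := fun ε => ∑ j : Fin N, lam M N (uf ε) (j:ℕ) * a j with hG_def
  have huf0 : uf 0 = fun _ => s := by funext i; simp [huf_def]
  have hG0 : G 0 = C := by
    rw [hG_def]
    simp only [huf0]
    rw [← hLC]
    refine Finset.sum_congr rfl fun j _ => ?_
    rw [lam_const M N hMN s (j:ℕ) j.2, ha_def, hL_def]
    simp only
    field_simp
  have hGcont : Continuous G := by
    rw [hG_def]
    apply continuous_finset_sum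
    intro j _
    refine Continuous.mul ?_ continuous_const
    have hg : ∀ i : ℕ, Continuous (fun ε : ℝ => s * (1 - ε * ((i:ℝ)+1))) := by
      intro i
      exact continuous_const.mul (continuous_const.sub (continuous_id.mul continuous_const))
    have hcl := continuous_lam M N (j:ℕ) (fun i ε => s * (1 - ε * ((i:ℝ)+1))) hg
    simpa [huf_def] using hcl
  set Φ : ℝ → ℝ := fun ε => C + c' * (G ε)^2 with hΦ_def
  have hΦ0 : Φ 0 < 0 := by
    rw [hΦ_def]
    simp only [hG0]
    nlinarith [hC, hc'C]
  have hΦcont : Continuous Φ := by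
    rw [hΦ_def]
    exact continuous_const.add (continuous_const.mul (hGcont.pow 2))
  have hev : ∀ᶠ ε in nhds (0:ℝ), Φ ε < 0 :=
    (hΦcont.continuousAt).eventually (gt_mem_nhds hΦ0)
  obtain ⟨δ, hδ, hball⟩ := Metric.eventually_nhds_iff.mp hev
  have hNpos : (0:ℝ) < N := by exact_mod_cast Nat.pos_of_ne_zero (by omega)
  set ε : ℝ := min (δ/2) (1/(2*N)) with hε_def
  have hεpos : 0 < ε := lt_min (by linarith) (by positivity)
  have hεN : ε * N ≤ 1/2 := by
    have h1 : ε ≤ 1/(2*N) := min_le_right _ _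
    calc ε * N ≤ (1/(2*N)) * N := mul_le_mul_of_nonneg_right h1 hNpos.le
      _ = 1/2 := by field_simp
  have hΦε : Φ ε < 0 := by
    apply hball
    rw [Real.dist_eq, sub_zero, abs_of_pos hεpos]
    calc ε ≤ δ/2 := min_le_left _ _
      _ < δ := by linarith
  have hfrac : ∀ i : Fin N, 0 < ε * ((i:ℝ)+1) ∧ ε * ((i:ℝ)+1) ≤ 1/2 := by
    intro i
    have hi1 : ((i:ℕ):ℝ) + 1 ≤ (N:ℝ) := by
      have := i.2
      exact_mod_cast Nat.succ_le_of_lt this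
    constructor
    · positivity
    · calc ε * ((i:ℝ)+1) ≤ ε * N := mul_le_mul_of_nonneg_left hi1 hεpos.le
        _ ≤ 1/2 := hεN
  refine ⟨fun i => uf ε (i:ℕ), ?_, ?_⟩
  · intro i
    obtain ⟨hf1, hf2⟩ := hfrac i
    constructor
    · rw [huf_def]
      simp only
      apply mul_pos hs
      linarith
    · rw [huf_def]
      simp only
      nlinarith
  · intro hPSD
    set v : Fin N → ℝ := fun i => uf ε (i:ℕ) with hv_def
    have hvinj : Function.Injective v := by
      intro i i' h
      rw [hv_def] at h
      simp only [huf_def] at h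
      have h1 := mul_left_cancel₀ hs.ne' h
      have h2 : ε * (((i:ℕ):ℝ)+1) = ε * (((i':ℕ):ℝ)+1) := by linarith
      have h3 := mul_left_cancel₀ hεpos.ne' h2
      have h4 : ((i:ℕ):ℝ) = ((i':ℕ):ℝ) := by linarith
      exact Fin.ext (by exact_mod_cast h4)
    set V := Matrix.vandermonde v with hV_def
    have hdet : V.det ≠ 0 := by
      rw [hV_def, Matrix.det_vandermonde]
      apply Finset.prod_ne_zero_iff.mpr
      intro i _
      apply Finset.prod_ne_zero_iff.mpr
      intro j hj
      have hij : i < j := Finset.mem_Ioi.mp hj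
      exact sub_ne_zero.mpr (fun hEq => ne_of_gt hij (hvinj hEq))
    have hdetT : IsUnit (Vᵀ).det := by
      rw [Matrix.det_transpose]
      exact isUnit_iff_ne_zero.mpr hdet
    set w : Fin N → ℝ := (Vᵀ)⁻¹ *ᵥ a with hw_def
    have hVw : Vᵀ *ᵥ w = a := by
      rw [hw_def, Matrix.mulVec_mulVec, Matrix.mul_nonsing_inv _ hdetT, Matrix.one_mulVec]
    have hS : ∀ j : Fin N, ∑ i : Fin N, w i * v i ^ (j:ℕ) = a j := by
      intro j
      have hj := congrFun hVw j
      simp only [hV_def, Matrix.mulVec, dotProduct, Matrix.transpose_apply,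
        Matrix.vandermonde_apply] at hj
      rw [← hj]
      exact Finset.sum_congr rfl fun i _ => mul_comm _ _
    have hSM : ∑ i : Fin N, w i * v i ^ M = G ε := by
      have hstep : ∀ i : Fin N, v i ^ M
          = ∑ j ∈ Finset.range N, lam M N (uf ε) j * v i ^ j := by
        intro i
        exact (interp M N hMN (uf ε) i.2).symm
      calc ∑ i : Fin N, w i * v i ^ M
          = ∑ i : Fin N, ∑ j ∈ Finset.range N, lam M N (uf ε) j * (w i * v i ^ j) := by
            refine Finset.sum_congr rfl fun i _ => ?_
            rw [hstep i, Finset.mul_sum]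
            exact Finset.sum_congr rfl fun j _ => by ring
        _ = ∑ j ∈ Finset.range N, lam M N (uf ε) j * ∑ i : Fin N, w i * v i ^ j := by
            rw [Finset.sum_comm]
            exact Finset.sum_congr rfl fun j _ => by rw [Finset.mul_sum]
        _ = ∑ j : Fin N, lam M N (uf ε) (j:ℕ) * ∑ i : Fin N, w i * v i ^ (j:ℕ) := by
            rw [← Fin.sum_univ_eq_sum_range (fun j => lam M N (uf ε) j * ∑ i : Fin N, w i * v i ^ j) N]
        _ = ∑ j : Fin N, lam M N (uf ε) (j:ℕ) * a j := by
            exact Finset.sum_congr rfl fun j _ => by rw [hS j]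
        _ = G ε := by rw [hG_def]
    have hq := hPSD.dotProduct_mulVec_nonneg w
    have hstar : star w = w := funext fun i => by simp
    rw [hstar] at hq
    have hQ : (w ⬝ᵥ ((Matrix.of fun i k : Fin N =>
          (∑ j : Fin N, c j * (v i * v k) ^ (j : ℕ)) + c' * (v i * v k) ^ M) *ᵥ w))
        = (∑ j : Fin N, c j * (a j)^2) + c' * (G ε)^2 := by
      calc (w ⬝ᵥ ((Matrix.of fun i k : Fin N =>
          (∑ j : Fin N, c j * (v i * v k) ^ (j : ℕ)) + c' * (v i * v k) ^ M) *ᵥ w))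
          = ∑ i : Fin N, ∑ k : Fin N,
              ((∑ j : Fin N, c j * ((w i * v i^(j:ℕ)) * (w k * v k^(j:ℕ))))
                + c' * ((w i * v i^M) * (w k * v k^M))) := by
            simp only [dotProduct, Matrix.mulVec, Matrix.of_apply]
            refine Finset.sum_congr rfl fun i _ => ?_
            rw [Finset.mul_sum]
            refine Finset.sum_congr rfl fun k _ => ?_
            rw [add_mul, mul_add, Finset.sum_mul, Finset.mul_sum]
            congr 1
            · refine Finset.sum_congr rfl fun j _ => ?_
              rw [mul_pow]
              ring
            · rw [mul_pow]
              ring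
        _ = (∑ i : Fin N, ∑ k : Fin N, ∑ j : Fin N,
              c j * ((w i * v i^(j:ℕ)) * (w k * v k^(j:ℕ))))
            + ∑ i : Fin N, ∑ k : Fin N, c' * ((w i * v i^M) * (w k * v k^M)) := by
            simp only [Finset.sum_add_distrib]
        _ = (∑ j : Fin N, c j * ((∑ i : Fin N, w i * v i^(j:ℕ)) * (∑ k : Fin N, w k * v k^(j:ℕ))))
            + c' * ((∑ i : Fin N, w i * v i^M) * (∑ k : Fin N, w k * v k^M)) := by
            congr 1
            · calc ∑ i : Fin N, ∑ k : Fin N, ∑ j : Fin N,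
                    c j * ((w i * v i^(j:ℕ)) * (w k * v k^(j:ℕ)))
                  = ∑ i : Fin N, ∑ j : Fin N, ∑ k : Fin N,
                    c j * ((w i * v i^(j:ℕ)) * (w k * v k^(j:ℕ))) :=
                    Finset.sum_congr rfl fun i _ => Finset.sum_comm
                _ = ∑ j : Fin N, ∑ i : Fin N, ∑ k : Fin N,
                    c j * ((w i * v i^(j:ℕ)) * (w k * v k^(j:ℕ))) := Finset.sum_comm
                _ = _ := by
                    refine Finset.sum_congr rfl fun j _ => ?_
                    rw [Finset.sum_mul_sum, Finset.mul_sum]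
                    refine Finset.sum_congr rfl fun i _ => ?_
                    rw [Finset.mul_sum]
            · rw [Finset.sum_mul_sum, Finset.mul_sum]
              refine Finset.sum_congr rfl fun i _ => ?_
              rw [Finset.mul_sum]
        _ = (∑ j : Fin N, c j * (a j)^2) + c' * (G ε)^2 := by
            rw [hSM]
            congr 1
            · refine Finset.sum_congr rfl fun j _ => ?_
              rw [hS j, sq]
            · rw [sq]
    rw [hQ] at hq
    have hca : ∑ j : Fin N, c j * (a j)^2 = C := by
      rw [← hLC, ha_def]
      refine Finset.sum_congr rfl fun j _ => ?_
      have := (hc j).ne'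
      field_simp
    rw [hca] at hq
    have : Φ ε = C + c' * (G ε)^2 := by rw [hΦ_def]
    linarith
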